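/- The linear-fractional distribution LF(h,g,m) has a linear-fractional probability generating function: for every sequence s = (s_1,s_2,...) with 0 ≤ s_j ≤ 1 for all j, the sum over all finitely supported vectors k of nonnegative integers of P(k)·∏_j s_j^{k_j} equals h_0 + (Σ_{j≥1} h_j s_j)/(1 + m − m Σ_{j≥1} g_j s_j). In particular (taking s_j = 1 for all j) the masses P(k) sum to 1. -/

import Mathlib

open scoped ENNReal BigOperators
open Filter Topology

/-- The mass assigned to `k + e_i`:
`h_i · m^k (1+m)^{-k-1} · (k!/(k_1! k_2! ⋯)) · ∏_j g_j^{k_j}` with `k = Σ_j k_j`. -/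
noncomputable def lfTerm (h g : ℕ → ℝ≥0∞) (m : ℝ≥0∞) (k : ℕ →₀ ℕ) (i : ℕ) : ℝ≥0∞ :=
  h i * m ^ (∑ j ∈ k.support, k j) / (1 + m) ^ ((∑ j ∈ k.support, k j) + 1) *
    (Nat.multinomial k.support k : ℝ≥0∞) * ∏ j ∈ k.support, g j ^ k j

/-- The linear-fractional probability mass function `LF(h,g,m)` on finitely supported
vectors of nonnegative integers: `P(0) = h_0 = 1 - Σ_j h_j` and for `K ≠ 0`,
`P(K) = Σ_{i : K_i ≥ 1}` of the mass `lfTerm` assigned to the decomposition `K = k + e_i`. -/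
noncomputable def LFpmf (h g : ℕ → ℝ≥0∞) (m : ℝ≥0∞) (K : ℕ →₀ ℕ) : ℝ≥0∞ :=
  if K = 0 then 1 - ∑' j, h j
  else ∑' i, if K i ≠ 0 then lfTerm h g m (K - Finsupp.single i 1) i else 0

private lemma multinomial_ext (s : Finset ℕ) (k : ℕ →₀ ℕ) (hst : k.support ⊆ s) :
    Nat.multinomial s k = Nat.multinomial k.support k := by
  unfold Nat.multinomial
  rw [Finset.sum_subset hst (fun x _ hx => Finsupp.notMem_support_iff.mp hx),
    Finset.prod_subset hst (fun x _ hx => by simp [Finsupp.notMem_support_iff.mp hx])]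

private lemma prod_pow_ext (s : Finset ℕ) (y : ℕ → ℝ≥0∞) (k : ℕ →₀ ℕ) (hst : k.support ⊆ s) :
    ∏ j ∈ s, y j ^ k j = ∏ j ∈ k.support, y j ^ k j :=
  (Finset.prod_subset hst (fun x _ hx => by
    rw [Finsupp.notMem_support_iff.mp hx, pow_zero])).symm

private lemma finsupp_sum_pow (s : Finset ℕ) (y : ℕ → ℝ≥0∞) (n : ℕ) :
    (∑ i ∈ s, y i) ^ n
      = ∑ k ∈ Finset.finsuppAntidiag s n, (Nat.multinomial s k : ℝ≥0∞) * ∏ i ∈ s, y i ^ k i := by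
  rw [Finset.sum_pow_eq_sum_piAntidiag, Finset.finsuppAntidiag, Finset.sum_map,
    ← Finset.sum_attach (Finset.piAntidiag s n)
      (fun f => (Nat.multinomial s f : ℝ≥0∞) * ∏ i ∈ s, y i ^ f i)]
  rfl

private lemma iSup_pow_mono {ι : Type*} [Nonempty ι] [SemilatticeSup ι] (A : ι → ℝ≥0∞)
    (hA : Monotone A) (n : ℕ) : (⨆ i, A i) ^ n = ⨆ i, (A i) ^ n := by
  induction n with
  | zero => simp
  | succ n ih =>
    rw [pow_succ, ih, ENNReal.iSup_mul]
    simp_rw [ENNReal.mul_iSup]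
    apply le_antisymm
    · refine iSup_le fun i => iSup_le fun j => ?_
      calc A i ^ n * A j ≤ A (i ⊔ j) ^ n * A (i ⊔ j) :=
            mul_le_mul' (pow_le_pow_left' (hA le_sup_left) n) (hA le_sup_right)
        _ = A (i ⊔ j) ^ (n + 1) := (pow_succ _ _).symm
        _ ≤ ⨆ i, A i ^ (n + 1) := le_iSup (fun i => A i ^ (n+1)) _
    · refine iSup_le fun i => ?_
      rw [pow_succ]
      exact le_iSup_of_le i (le_iSup_of_le i le_rfl)

private lemma lemmaMn (y : ℕ → ℝ≥0∞) (n : ℕ) :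
    (∑' k : ℕ →₀ ℕ, if (∑ j ∈ k.support, k j) = n
        then (Nat.multinomial k.support k : ℝ≥0∞) * ∏ j ∈ k.support, y j ^ k j else 0)
      = (∑' j, y j) ^ n := by
  set f0 : (ℕ →₀ ℕ) → ℝ≥0∞ :=
    fun k => (Nat.multinomial k.support k : ℝ≥0∞) * ∏ j ∈ k.support, y j ^ k j with hf0
  have h1 : (∑' k : ℕ →₀ ℕ, if (∑ j ∈ k.support, k j) = n then f0 k else 0)
      = ∑' k : {k : ℕ →₀ ℕ // (∑ j ∈ k.support, k j) = n}, f0 k.1 := by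
    refine Eq.trans (tsum_congr fun k => ?_)
      (_root_.tsum_subtype {k : ℕ →₀ ℕ | (∑ j ∈ k.support, k j) = n} f0).symm
    rw [Set.indicator_apply]
    rfl
  have h2 : (∑' k : {k : ℕ →₀ ℕ // (∑ j ∈ k.support, k j) = n}, f0 k.1)
      = ⨆ s : Finset ℕ,
          ∑ k ∈ (Finset.finsuppAntidiag s n).subtype
              (fun k : ℕ →₀ ℕ => (∑ j ∈ k.support, k j) = n), f0 k.1 := by
    apply ENNReal.tsum_eq_iSup_sum'
    intro t
    refine ⟨t.sup fun k => k.1.support, fun x hx => ?_⟩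
    rw [Finset.mem_subtype, Finset.mem_finsuppAntidiag]
    have hsupp : x.1.support ⊆ t.sup fun k => k.1.support :=
      Finset.le_sup (f := fun k => k.1.support) hx
    refine ⟨?_, hsupp⟩
    rw [← Finset.sum_subset hsupp (fun j _ hj => Finsupp.notMem_support_iff.mp hj)]
    exact x.2
  have h3 : ∀ s : Finset ℕ,
      (∑ k ∈ (Finset.finsuppAntidiag s n).subtype
          (fun k : ℕ →₀ ℕ => (∑ j ∈ k.support, k j) = n), f0 k.1)
        = (∑ i ∈ s, y i) ^ n := by
    intro s
    rw [Finset.sum_subtype_eq_sum_filter, finsupp_sum_pow]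
    have : Finset.filter (fun k : ℕ →₀ ℕ => (∑ j ∈ k.support, k j) = n)
        (Finset.finsuppAntidiag s n) = Finset.finsuppAntidiag s n := by
      refine Finset.filter_true_of_mem fun k hk => ?_
      rw [Finset.mem_finsuppAntidiag] at hk
      rw [show (∑ j ∈ k.support, k j) = s.sum ⇑k from
        Finset.sum_subset hk.2 (fun j _ hj => Finsupp.notMem_support_iff.mp hj)]
      exact hk.1
    rw [this]
    refine Finset.sum_congr rfl fun k hk => ?_
    rw [Finset.mem_finsuppAntidiag] at hk
    rw [multinomial_ext s k hk.2, prod_pow_ext s y k hk.2]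
  show (∑' k : ℕ →₀ ℕ, if (∑ j ∈ k.support, k j) = n then f0 k else 0) = _
  simp_rw [h1, h2, h3]
  rw [ENNReal.tsum_eq_iSup_sum,
    iSup_pow_mono _ (fun a b hab => Finset.sum_le_sum_of_subset hab) n]

private lemma lemmaM (y : ℕ → ℝ≥0∞) :
    (∑' k : ℕ →₀ ℕ, (Nat.multinomial k.support k : ℝ≥0∞) * ∏ j ∈ k.support, y j ^ k j)
      = (1 - ∑' j, y j)⁻¹ := by
  have h1 : ∀ k : ℕ →₀ ℕ,
      (Nat.multinomial k.support k : ℝ≥0∞) * ∏ j ∈ k.support, y j ^ k j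
        = ∑' n : ℕ, if (∑ j ∈ k.support, k j) = n
            then (Nat.multinomial k.support k : ℝ≥0∞) * ∏ j ∈ k.support, y j ^ k j else 0 := by
    intro k
    simp_rw [eq_comm (a := ∑ j ∈ k.support, k j)]
    exact (tsum_ite_eq (∑ j ∈ k.support, k j) (fun _ => (Nat.multinomial k.support k : ℝ≥0∞) * ∏ j ∈ k.support, y j ^ k j)).symm
  calc (∑' k : ℕ →₀ ℕ, (Nat.multinomial k.support k : ℝ≥0∞) * ∏ j ∈ k.support, y j ^ k j)
      = ∑' (k : ℕ →₀ ℕ) (n : ℕ), if (∑ j ∈ k.support, k j) = n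
          then (Nat.multinomial k.support k : ℝ≥0∞) * ∏ j ∈ k.support, y j ^ k j else 0 :=
        tsum_congr h1
    _ = ∑' (n : ℕ) (k : ℕ →₀ ℕ), if (∑ j ∈ k.support, k j) = n
          then (Nat.multinomial k.support k : ℝ≥0∞) * ∏ j ∈ k.support, y j ^ k j else 0 :=
        ENNReal.tsum_comm
    _ = ∑' n : ℕ, (∑' j, y j) ^ n := tsum_congr fun n => lemmaMn y n
    _ = (1 - ∑' j, y j)⁻¹ := ENNReal.tsum_geometric _

private lemma term_eq (h g : ℕ → ℝ≥0∞) (m : ℝ≥0∞) (s : ℕ → ℝ≥0∞) (k : ℕ →₀ ℕ) (i : ℕ) :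
    lfTerm h g m k i * (s i * ∏ j ∈ k.support, s j ^ k j)
      = h i * s i * ((1 + m)⁻¹ * ((Nat.multinomial k.support k : ℝ≥0∞)
          * ∏ j ∈ k.support, (m * (1 + m)⁻¹ * (g j * s j)) ^ k j)) := by
  rw [lfTerm, div_eq_mul_inv, ENNReal.inv_pow]
  simp_rw [mul_pow, Finset.prod_mul_distrib, Finset.prod_pow_eq_pow_sum]
  ring

private lemma prod_shift (s : ℕ → ℝ≥0∞) (k : ℕ →₀ ℕ) (i : ℕ) :
    (k + Finsupp.single i 1).prod (fun j e => s j ^ e)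
      = s i * k.prod fun j e => s j ^ e := by
  rw [Finsupp.prod_add_index' (fun a => pow_zero (s a)) (fun a b c => pow_add (s a) b c),
    Finsupp.prod_single_index (h := fun j e => s j ^ e) (pow_zero (s i)), pow_one, mul_comm]

private lemma keyGF (h g : ℕ → ℝ≥0∞) (m : ℝ≥0∞) (hm' : m ≠ ⊤)
    (s : ℕ → ℝ≥0∞) :
    (∑' K : ℕ →₀ ℕ, LFpmf h g m K * ∏ j ∈ K.support, s j ^ K j)
      = (1 - ∑' j, h j)
        + (∑' j, h j * s j) / (1 + m - m * ∑' j, g j * s j) := by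
  classical
  have h1m_ne_top : (1 + m) ≠ ⊤ := ENNReal.add_ne_top.mpr ⟨ENNReal.one_ne_top, hm'⟩
  have h1m_ne_zero : (1 + m) ≠ 0 := by
    simp [add_eq_zero]
  -- pointwise decomposition
  have key : ∀ K : ℕ →₀ ℕ, LFpmf h g m K * ∏ j ∈ K.support, s j ^ K j
      = (if K = 0 then (1 - ∑' j, h j) else 0)
        + ∑' i : ℕ, if K i ≠ 0
            then lfTerm h g m (K - Finsupp.single i 1) i * ∏ j ∈ K.support, s j ^ K j
            else 0 := by
    intro K
    rw [LFpmf]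
    by_cases hK : K = 0
    · subst hK
      simp
    · rw [if_neg hK, if_neg hK, zero_add, ← ENNReal.tsum_mul_right]
      exact tsum_congr fun i => by rw [ite_mul, zero_mul]
  -- reindexing for a fixed i
  have reindex : ∀ i : ℕ,
      (∑' K : ℕ →₀ ℕ, if K i ≠ 0
          then lfTerm h g m (K - Finsupp.single i 1) i * ∏ j ∈ K.support, s j ^ K j
          else 0)
        = ∑' k : ℕ →₀ ℕ, lfTerm h g m k i * (s i * ∏ j ∈ k.support, s j ^ k j) := by
    intro i
    have hinj : Function.Injective (fun k : ℕ →₀ ℕ => k + Finsupp.single i 1) := by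
      intro a b hab
      ext j
      have h2 : a j + (Finsupp.single i 1) j = b j + (Finsupp.single i 1) j := by
        have := DFunLike.congr_fun hab j
        simpa [Finsupp.add_apply] using this
      exact add_right_cancel h2
    have hsupp : Function.support (fun K : ℕ →₀ ℕ => if K i ≠ 0
        then lfTerm h g m (K - Finsupp.single i 1) i * ∏ j ∈ K.support, s j ^ K j else 0)
        ⊆ Set.range (fun k : ℕ →₀ ℕ => k + Finsupp.single i 1) := by
      intro K hK
      have hKi : K i ≠ 0 := by
        by_contra hc
        simp [hc] at hK
      refine ⟨K - Finsupp.single i 1, ?_⟩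
      exact tsub_add_cancel_of_le (Finsupp.single_le_iff.mpr (Nat.one_le_iff_ne_zero.mpr hKi))
    rw [← Function.Injective.tsum_eq hinj hsupp]
    refine tsum_congr fun k => ?_
    set K' : ℕ →₀ ℕ := k + Finsupp.single i 1 with hK'
    have hKi : K' i ≠ 0 := by simp [hK', Finsupp.add_apply]
    rw [if_pos hKi, hK', add_tsub_cancel_right]
    congr 1
    exact prod_shift s k i
  calc (∑' K : ℕ →₀ ℕ, LFpmf h g m K * ∏ j ∈ K.support, s j ^ K j)
      = (∑' K : ℕ →₀ ℕ, if K = 0 then (1 - ∑' j, h j) else 0)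
        + ∑' (K : ℕ →₀ ℕ) (i : ℕ), if K i ≠ 0
            then lfTerm h g m (K - Finsupp.single i 1) i * ∏ j ∈ K.support, s j ^ K j
            else 0 := by rw [← ENNReal.tsum_add]; exact tsum_congr key
    _ = (1 - ∑' j, h j)
        + ∑' (i : ℕ) (K : ℕ →₀ ℕ), if K i ≠ 0
            then lfTerm h g m (K - Finsupp.single i 1) i * ∏ j ∈ K.support, s j ^ K j
            else 0 := by rw [tsum_ite_eq, ENNReal.tsum_comm]
    _ = (1 - ∑' j, h j)
        + ∑' i : ℕ, h i * s i * ((1 + m)⁻¹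
            * (1 - ∑' j, m * (1 + m)⁻¹ * (g j * s j))⁻¹) := by
        congr 1
        refine tsum_congr fun i => ?_
        rw [reindex i]
        simp_rw [term_eq h g m s]
        rw [ENNReal.tsum_mul_left, ENNReal.tsum_mul_left, lemmaM]
    _ = (1 - ∑' j, h j)
        + (∑' j, h j * s j) / (1 + m - m * ∑' j, g j * s j) := by
        congr 1
        rw [ENNReal.tsum_mul_right, ENNReal.tsum_mul_left, div_eq_mul_inv]
        congr 1
        rw [← ENNReal.mul_inv (Or.inl h1m_ne_zero) (Or.inl h1m_ne_top)]
        congr 1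
        rw [ENNReal.mul_sub (fun _ _ => h1m_ne_top), mul_one]
        congr 1
        rw [show (1 + m) * (m * (1 + m)⁻¹ * (∑' j, g j * s j))
            = ((1 + m) * (1 + m)⁻¹) * (m * ∑' j, g j * s j) by ring,
          ENNReal.mul_inv_cancel h1m_ne_zero h1m_ne_top, one_mul]

theorem lf_generating_function
    (h g : ℕ → ℝ≥0∞) (m : ℝ≥0∞) (hm : 0 < m) (hm' : m ≠ ⊤)
    (hh : ∑' j, h j ≤ 1) (hg : ∑' j, g j = 1)
    (s : ℕ → ℝ≥0∞) (hs : ∀ j, s j ≤ 1) :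
    (∑' K : ℕ →₀ ℕ, LFpmf h g m K * ∏ j ∈ K.support, s j ^ K j)
      = (1 - ∑' j, h j) + (∑' j, h j * s j) / (1 + m - m * ∑' j, g j * s j) ∧
    (∑' K : ℕ →₀ ℕ, LFpmf h g m K) = 1 := by
  refine ⟨keyGF h g m hm' s, ?_⟩
  have h1 := keyGF h g m hm' (fun _ => 1)
  simp only [one_pow, Finset.prod_const_one, mul_one] at h1
  rw [h1, hg, mul_one, ENNReal.add_sub_cancel_right hm', div_one, tsub_add_cancel_of_le hh]
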